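/- Let c be a Coxeter element of W, of order h. Then h·P ⊆ Q. Consequently, the index [P : Q] is finite and every prime number dividing [P : Q] divides h. -/

import Mathlib

open Module

/-- A finite, reduced, crystallographic root system spanning the `ℚ`-vector space `V`,
given together with its coroots (viewed as linear functionals via the pairing
`⟨·, α^∨⟩`). -/
structure RootSystemData (V : Type*) [AddCommGroup V] [Module ℚ V] where
  /-- The set of roots `R ⊆ V`. -/
  roots : Set V
  finite : roots.Finite
  zero_not_mem : (0 : V) ∉ roots
  span_eq_top : Submodule.span ℚ roots = ⊤
  /-- The coroot pairing `x ↦ ⟨x, α^∨⟩`. -/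
  coroot : V → (V →ₗ[ℚ] ℚ)
  coroot_self : ∀ α ∈ roots, coroot α α = 2
  /-- Each reflection `s_α : x ↦ x - ⟨x, α^∨⟩α` maps `R` into itself. -/
  reflection_mem : ∀ α ∈ roots, ∀ β ∈ roots, β - coroot α β • α ∈ roots
  /-- Crystallographic condition: `⟨β, α^∨⟩ ∈ ℤ` for all roots `α, β`. -/
  crystallographic : ∀ α ∈ roots, ∀ β ∈ roots, ∃ n : ℤ, coroot α β = (n : ℚ)
  /-- Reduced: the only multiples of a root `α` which are roots are `±α`. -/
  reduced : ∀ α ∈ roots, ∀ t : ℚ, t • α ∈ roots → t = 1 ∨ t = -1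

namespace RootSystemData

variable {V : Type*} [AddCommGroup V] [Module ℚ V] (RS : RootSystemData V)

/-- The reflection `s_α` in a root `α`, as a linear endomorphism of `V`. -/
def reflMap (α : V) : V →ₗ[ℚ] V :=
  LinearMap.id - LinearMap.smulRight (RS.coroot α) α

lemma reflMap_apply (α x : V) : RS.reflMap α x = x - RS.coroot α x • α := rfl

lemma reflMap_reflMap {α : V} (h2 : RS.coroot α α = 2) (x : V) :
    RS.reflMap α (RS.reflMap α x) = x := by
  rw [reflMap_apply, reflMap_apply, map_sub, map_smul, smul_eq_mul, h2, sub_smul, mul_smul]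
  have : (2 : ℚ) • α = α + α := two_smul ℚ α
  rw [this]
  rw [smul_add]
  abel

/-- The reflection `s_α` in a root `α`, as a linear automorphism of `V`. -/
def refl (α : V) (hα : α ∈ RS.roots) : V ≃ₗ[ℚ] V :=
  LinearEquiv.ofLinear (RS.reflMap α) (RS.reflMap α)
    (by ext x; exact RS.reflMap_reflMap (RS.coroot_self α hα) x)
    (by ext x; exact RS.reflMap_reflMap (RS.coroot_self α hα) x)

/-- The Weyl group of the root system: the subgroup of `GL(V)` generated by the
reflections in the roots. -/
def weylGroup : Subgroup (V ≃ₗ[ℚ] V) :=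
  Subgroup.closure {w | ∃ (α : V) (hα : α ∈ RS.roots), w = RS.refl α hα}

/-- A base (system of simple roots) of the root system: a linearly independent spanning
subset of `R` such that every root is a linear combination of base elements with integer
coefficients which are either all nonnegative or all nonpositive. -/
structure IsBase (Δ : Finset V) : Prop where
  subset : ↑Δ ⊆ RS.roots
  indep : LinearIndependent ℚ (fun x : (Δ : Set V) => (x : V))
  span_eq_top : Submodule.span ℚ (Δ : Set V) = ⊤
  pos_or_neg : ∀ β ∈ RS.roots,
    (∃ f : V → ℕ, β = ∑ α ∈ Δ, (f α : ℚ) • α) ∨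
    (∃ f : V → ℕ, β = -∑ α ∈ Δ, (f α : ℚ) • α)

/-- A Coxeter element of the Weyl group: a product of the reflections in the simple roots
of some base, each simple root occurring exactly once, in some order. -/
def IsCoxeterElement (c : V ≃ₗ[ℚ] V) : Prop :=
  ∃ (Δ : Finset V) (hΔ : RS.IsBase Δ) (l : List {x // x ∈ Δ}),
    l.Nodup ∧ (∀ α : {x // x ∈ Δ}, α ∈ l) ∧
    c = (l.map fun α => RS.refl α.1 (hΔ.subset α.2)).prod

/-- Irreducibility of the root system: `R` admits no decomposition into two nonempty
mutually orthogonal subsets (orthogonality expressed via the coroot pairing). -/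
def IsIrreducible : Prop :=
  ∀ R₁ R₂ : Set V, R₁ ∪ R₂ = RS.roots →
    (∀ α ∈ R₁, ∀ β ∈ R₂, RS.coroot α β = 0) → R₁ = ∅ ∨ R₂ = ∅

/-- The root lattice `Q`: the subgroup of `V` generated by the roots. -/
def rootLattice : AddSubgroup V := AddSubgroup.closure RS.roots

/-- The weight lattice `P = {x ∈ V : ⟨x, α^∨⟩ ∈ ℤ for every root α}`. -/
def weightLattice : AddSubgroup V where
  carrier := {x : V | ∀ α ∈ RS.roots, ∃ n : ℤ, RS.coroot α x = (n : ℚ)}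
  zero_mem' := fun α _ => ⟨0, by simp⟩
  add_mem' := by
    rintro x y hx hy α hα
    obtain ⟨n, hn⟩ := hx α hα
    obtain ⟨m, hm⟩ := hy α hα
    exact ⟨n + m, by rw [map_add, hn, hm]; push_cast; ring⟩
  neg_mem' := by
    rintro x hx α hα
    obtain ⟨n, hn⟩ := hx α hα
    exact ⟨-n, by rw [map_neg, hn]; push_cast; ring⟩

-- NEW MATERIAL

lemma refl_apply' (α : V) (hα : α ∈ RS.roots) (x : V) :
    RS.refl α hα x = x - RS.coroot α x • α := rfl

lemma refl_mul_self (α : V) (hα : α ∈ RS.roots) :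
    RS.refl α hα * RS.refl α hα = 1 := by
  ext x
  exact RS.reflMap_reflMap (RS.coroot_self α hα) x

/-- The set of linear automorphisms preserving the roots. -/
def Pres : Set (V ≃ₗ[ℚ] V) := {w | ∀ β ∈ RS.roots, w β ∈ RS.roots}

lemma one_mem_Pres : (1 : V ≃ₗ[ℚ] V) ∈ RS.Pres := fun _ hβ => hβ

lemma mul_mem_Pres {w₁ w₂ : V ≃ₗ[ℚ] V} (h₁ : w₁ ∈ RS.Pres) (h₂ : w₂ ∈ RS.Pres) :
    w₁ * w₂ ∈ RS.Pres := fun β hβ => h₁ _ (h₂ β hβ)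

lemma refl_mem_Pres (α : V) (hα : α ∈ RS.roots) : RS.refl α hα ∈ RS.Pres :=
  fun β hβ => RS.reflection_mem α hα β hβ

lemma pow_mem_Pres {w : V ≃ₗ[ℚ] V} (hw : w ∈ RS.Pres) (k : ℕ) : w ^ k ∈ RS.Pres := by
  induction k with
  | zero => simpa using RS.one_mem_Pres
  | succ n ih => rw [pow_succ]; exact RS.mul_mem_Pres ih hw

lemma list_prod_mem_Pres (L : List (V ≃ₗ[ℚ] V)) (hL : ∀ e ∈ L, e ∈ RS.Pres) :
    L.prod ∈ RS.Pres := by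
  induction L with
  | nil => simpa using RS.one_mem_Pres
  | cons e t ih =>
    rw [List.prod_cons]
    exact RS.mul_mem_Pres (hL e (List.mem_cons_self))
      (ih fun f hf => hL f (List.mem_cons_of_mem e hf))

lemma Pres_finite : RS.Pres.Finite := by
  haveI : Finite ↥RS.roots := RS.finite.to_subtype
  rw [← Set.finite_coe_iff]
  apply Finite.of_injective
    (fun w : ↥RS.Pres => fun β : ↥RS.roots => (⟨w.1 β.1, w.2 β.1 β.2⟩ : ↥RS.roots))
  intro w₁ w₂ hw
  apply Subtype.ext
  apply LinearEquiv.toLinearMap_injective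
  apply LinearMap.ext_on RS.span_eq_top
  intro x hx
  exact Subtype.ext_iff.mp (congrFun hw ⟨x, hx⟩)

variable [FiniteDimensional ℚ V]

lemma exists_invariant_form :
    ∃ B : V →ₗ[ℚ] V →ₗ[ℚ] ℚ,
      (∀ x : V, x ≠ 0 → 0 < B x x) ∧
      (∀ (α : V) (hα : α ∈ RS.roots), ∀ x y : V,
        B (RS.refl α hα x) (RS.refl α hα y) = B x y) := by
  classical
  set b := Module.finBasis ℚ V with hb
  set B0 : V →ₗ[ℚ] V →ₗ[ℚ] ℚ := LinearMap.mk₂ ℚ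
    (fun x y => ∑ i, b.repr x i * b.repr y i)
    (by intro x₁ x₂ y; simp [map_add, add_mul, Finset.sum_add_distrib])
    (by intro a x y; simp [Finset.mul_sum, mul_assoc])
    (by intro x y₁ y₂; simp [map_add, mul_add, Finset.sum_add_distrib])
    (by intro a x y; simp [Finset.mul_sum]; apply Finset.sum_congr rfl; intros; ring)
    with hB0
  have hB0apply : ∀ x y, B0 x y = ∑ i, b.repr x i * b.repr y i := fun x y => rfl
  have hB0nonneg : ∀ x, 0 ≤ B0 x x := by
    intro x
    rw [hB0apply]
    exact Finset.sum_nonneg fun i _ => mul_self_nonneg _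
  have hB0pos : ∀ x, x ≠ 0 → 0 < B0 x x := by
    intro x hx
    rw [hB0apply]
    have hne : b.repr x ≠ 0 := by
      intro h
      apply hx
      have := congrArg b.repr.symm h
      simpa using this
    obtain ⟨i, hi⟩ := Finsupp.ne_iff.mp hne
    apply Finset.sum_pos' (fun j _ => mul_self_nonneg _)
    exact ⟨i, Finset.mem_univ i, mul_self_pos.mpr (by simpa using hi)⟩
  have SFdef := RS.Pres_finite
  set SF := SFdef.toFinset with hSF
  refine ⟨LinearMap.mk₂ ℚ (fun x y => ∑ w ∈ SF, B0 (w x) (w y))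
    (by intro x₁ x₂ y; simp [map_add, Finset.sum_add_distrib])
    (by intro a x y; simp [map_smul, Finset.mul_sum])
    (by intro x y₁ y₂; simp [map_add, Finset.sum_add_distrib])
    (by intro a x y; simp [map_smul, Finset.mul_sum]), ?_, ?_⟩
  · intro x hx
    rw [LinearMap.mk₂_apply]
    apply Finset.sum_pos' (fun w _ => hB0nonneg _)
    refine ⟨1, ?_, ?_⟩
    · rw [hSF, Set.Finite.mem_toFinset]; exact RS.one_mem_Pres
    · have : (1 : V ≃ₗ[ℚ] V) x = x := rfl
      rw [this]; exact hB0pos x hx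
  · intro α hα x y
    rw [LinearMap.mk₂_apply, LinearMap.mk₂_apply]
    refine Finset.sum_equiv (Equiv.mulRight (RS.refl α hα)) ?_ ?_
    · intro w
      simp only [hSF, Set.Finite.mem_toFinset, Equiv.coe_mulRight]
      constructor
      · intro hw; exact RS.mul_mem_Pres hw (RS.refl_mem_Pres α hα)
      · intro hw
        have : w = w * RS.refl α hα * RS.refl α hα := by
          rw [mul_assoc, RS.refl_mul_self, mul_one]
        rw [this]
        exact RS.mul_mem_Pres hw (RS.refl_mem_Pres α hα)
    · intro w _
      rfl

lemma not_mem_span_of_base {Δ : Finset V} (hΔ : RS.IsBase Δ) {a : V} (ha : a ∈ Δ)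
    {s : Set V} (hs : s ⊆ ↑Δ) (has : a ∉ s) : a ∉ Submodule.span ℚ s := by
  intro hmem
  set s' : Set ↥(Δ : Set V) := {b | (b : V) ∈ s} with hs'
  have hx' : (⟨a, ha⟩ : ↥(Δ : Set V)) ∉ s' := has
  apply hΔ.indep.notMem_span_image hx'
  refine Submodule.span_mono ?_ hmem
  intro v hv
  exact ⟨⟨v, hs hv⟩, hv, rfl⟩

lemma eq_zero_of_coroot_base_eq_zero [FiniteDimensional ℚ V]
    {Δ : Finset V} (hΔ : RS.IsBase Δ) {x : V}
    (hx : ∀ α ∈ Δ, RS.coroot α x = 0) : x = 0 := by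
  obtain ⟨B, hpos, hinv⟩ := RS.exists_invariant_form
  by_contra hx0
  have key : ∀ α ∈ Δ, B x α = 0 := by
    intro α hαΔ
    have hα : α ∈ RS.roots := hΔ.subset hαΔ
    have h1 : RS.refl α hα α = -α := by
      rw [refl_apply', RS.coroot_self α hα]
      have : (2 : ℚ) • α = α + α := two_smul ℚ α
      rw [this]; abel
    have h2 := hinv α hα x α
    rw [h1, refl_apply', hx α hαΔ, zero_smul, sub_zero, map_neg] at h2
    linarith
  have hker : Submodule.span ℚ (Δ : Set V) ≤ LinearMap.ker (B x) :=
    Submodule.span_le.mpr fun α hα => LinearMap.mem_ker.mpr (key α hα)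
  rw [hΔ.span_eq_top] at hker
  have hxx : B x x = 0 := hker Submodule.mem_top
  exact absurd hxx (ne_of_gt (hpos x hx0))

lemma sub_prod_mem_span {Δ : Finset V} (hΔ : RS.IsBase Δ) :
    ∀ (l : List {x // x ∈ Δ}) (x : V),
      x - (l.map fun α => RS.refl α.1 (hΔ.subset α.2)).prod x ∈
        Submodule.span ℚ (Subtype.val '' {a | a ∈ l}) := by
  intro l
  induction l with
  | nil => intro x; simp
  | cons a t ih =>
    intro x
    have hprod : ((a :: t).map fun α => RS.refl α.1 (hΔ.subset α.2)).prod x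
        = RS.refl a.1 (hΔ.subset a.2)
            ((t.map fun α => RS.refl α.1 (hΔ.subset α.2)).prod x) := by
      rw [List.map_cons, List.prod_cons]; rfl
    set y := (t.map fun α => RS.refl α.1 (hΔ.subset α.2)).prod x with hy
    rw [hprod, refl_apply']
    have heq : x - (y - RS.coroot a.1 y • a.1) = (x - y) + RS.coroot a.1 y • a.1 := by abel
    rw [heq]
    apply Submodule.add_mem
    · refine Submodule.span_mono (Set.image_mono ?_) (ih x)
      intro b hb
      exact List.mem_cons_of_mem a hb
    · exact Submodule.smul_mem _ _
        (Submodule.subset_span ⟨a, List.mem_cons_self, rfl⟩)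

lemma coroot_eq_zero_of_fixed {Δ : Finset V} (hΔ : RS.IsBase Δ) :
    ∀ (l : List {x // x ∈ Δ}), l.Nodup → ∀ x : V,
      (l.map fun α => RS.refl α.1 (hΔ.subset α.2)).prod x = x →
      ∀ a ∈ l, RS.coroot a.1 x = 0 := by
  intro l
  induction l with
  | nil => intro _ x _ a ha; simp at ha
  | cons a t ih =>
    intro hnd x hfix b hb
    set y := (t.map fun α => RS.refl α.1 (hΔ.subset α.2)).prod x with hy
    have hprod : ((a :: t).map fun α => RS.refl α.1 (hΔ.subset α.2)).prod x
        = RS.refl a.1 (hΔ.subset a.2) y := by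
      rw [List.map_cons, List.prod_cons]; rfl
    rw [hprod, refl_apply'] at hfix
    have hxy : x - y = -(RS.coroot a.1 y • a.1) := by rw [← hfix]; abel
    have hmem : x - y ∈ Submodule.span ℚ (Subtype.val '' {c | c ∈ t}) :=
      RS.sub_prod_mem_span hΔ t x
    rw [hxy] at hmem
    have hmem' : RS.coroot a.1 y • a.1 ∈ Submodule.span ℚ (Subtype.val '' {c | c ∈ t}) := by
      have := Submodule.neg_mem _ hmem
      simpa using this
    have hanotint : a ∉ t := (List.nodup_cons.mp hnd).1
    have hca : RS.coroot a.1 y = 0 := by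
      by_contra hne
      have hain : a.1 ∈ Submodule.span ℚ (Subtype.val '' {c | c ∈ t}) := by
        have := Submodule.smul_mem _ (RS.coroot a.1 y)⁻¹ hmem'
        rwa [smul_smul, inv_mul_cancel₀ hne, one_smul] at this
      refine RS.not_mem_span_of_base hΔ a.2 ?_ ?_ hain
      · rintro v ⟨c, _, rfl⟩; exact c.2
      · rintro ⟨c, hc, hval⟩
        have hce : c = a := Subtype.ext hval
        exact hanotint (hce ▸ hc)
    have hxeqy : x = y := by rw [← hfix, hca, zero_smul, sub_zero]
    rcases List.mem_cons.mp hb with rfl | hbt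
    · rw [hxeqy]; exact hca
    · exact ih (List.nodup_cons.mp hnd).2 x (by rw [← hy, ← hxeqy]) b hbt

lemma eq_zero_of_coxeter_fixed [FiniteDimensional ℚ V] {c : V ≃ₗ[ℚ] V}
    (hc : RS.IsCoxeterElement c) {x : V} (hfix : c x = x) : x = 0 := by
  obtain ⟨Δ, hΔ, l, hnd, hcmpl, hceq⟩ := hc
  refine RS.eq_zero_of_coroot_base_eq_zero hΔ (fun α hα => ?_)
  exact RS.coroot_eq_zero_of_fixed hΔ l hnd x (by rw [← hceq]; exact hfix) ⟨α, hα⟩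
    (hcmpl ⟨α, hα⟩)

lemma weight_refl (α : V) (hα : α ∈ RS.roots) (x : V) (hx : x ∈ RS.weightLattice) :
    RS.refl α hα x ∈ RS.weightLattice ∧ x - RS.refl α hα x ∈ RS.rootLattice := by
  obtain ⟨n, hn⟩ := hx α hα
  constructor
  · intro β hβ
    obtain ⟨m, hm⟩ := hx β hβ
    obtain ⟨k, hk⟩ := RS.crystallographic β hβ α hα
    refine ⟨m - n * k, ?_⟩
    rw [refl_apply', map_sub, map_smul, hn, hm, hk, smul_eq_mul]
    push_cast; ring
  · rw [refl_apply']
    have heq : x - (x - RS.coroot α x • α) = RS.coroot α x • α := by abel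
    rw [heq, hn, Int.cast_smul_eq_zsmul]
    exact AddSubgroup.zsmul_mem _ (AddSubgroup.subset_closure hα) n

lemma weight_list_prod (L : List (V ≃ₗ[ℚ] V))
    (hL : ∀ e ∈ L, ∃ (α : V) (hα : α ∈ RS.roots), e = RS.refl α hα) (x : V)
    (hx : x ∈ RS.weightLattice) :
    L.prod x ∈ RS.weightLattice ∧ x - L.prod x ∈ RS.rootLattice := by
  induction L generalizing x with
  | nil =>
    refine ⟨hx, ?_⟩
    have : (List.prod [] : V ≃ₗ[ℚ] V) x = x := rfl
    rw [this, sub_self]; exact AddSubgroup.zero_mem _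
  | cons e t ih =>
    obtain ⟨hy, hxy⟩ := ih (fun f hf => hL f (List.mem_cons_of_mem e hf)) x hx
    obtain ⟨α, hα, rfl⟩ := hL e (List.mem_cons_self)
    obtain ⟨hz, hyz⟩ := RS.weight_refl α hα _ hy
    have hpc : (RS.refl α hα :: t).prod x = RS.refl α hα (t.prod x) := by
      rw [List.prod_cons]; rfl
    rw [hpc]
    refine ⟨hz, ?_⟩
    have heq : x - RS.refl α hα (t.prod x)
        = (x - t.prod x) + (t.prod x - RS.refl α hα (t.prod x)) := by abel
    rw [heq]
    exact AddSubgroup.add_mem _ hxy hyz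

lemma coxeter_mem_Pres {c : V ≃ₗ[ℚ] V} (hc : RS.IsCoxeterElement c) : c ∈ RS.Pres := by
  obtain ⟨Δ, hΔ, l, _, _, rfl⟩ := hc
  apply RS.list_prod_mem_Pres
  intro e he
  obtain ⟨a, _, rfl⟩ := List.mem_map.mp he
  exact RS.refl_mem_Pres _ _

lemma coxeter_orderOf_ne_zero {c : V ≃ₗ[ℚ] V} (hc : RS.IsCoxeterElement c) :
    orderOf c ≠ 0 := by
  have hcP := RS.coxeter_mem_Pres hc
  intro h0
  rw [orderOf_eq_zero_iff] at h0
  apply h0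
  have hmaps : Set.MapsTo (fun k : ℕ => c ^ k) Set.univ RS.Pres :=
    fun k _ => RS.pow_mem_Pres hcP k
  obtain ⟨i, -, j, -, hij, hpow⟩ :=
    Set.infinite_univ.exists_ne_map_eq_of_mapsTo hmaps RS.Pres_finite
  rcases hij.lt_or_gt with hlt | hlt
  · refine isOfFinOrder_iff_pow_eq_one.mpr ⟨j - i, Nat.sub_pos_of_lt hlt, ?_⟩
    have : c ^ (j - i) * c ^ i = c ^ i := by
      rw [← pow_add, Nat.sub_add_cancel hlt.le, ← hpow]
    exact mul_right_cancel (this.trans (one_mul _).symm)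
  · refine isOfFinOrder_iff_pow_eq_one.mpr ⟨i - j, Nat.sub_pos_of_lt hlt, ?_⟩
    have : c ^ (i - j) * c ^ j = c ^ j := by
      rw [← pow_add, Nat.sub_add_cancel hlt.le, hpow]
    exact mul_right_cancel (this.trans (one_mul _).symm)

lemma coxeter_weight_pow {c : V ≃ₗ[ℚ] V} (hc : RS.IsCoxeterElement c) (k : ℕ) (x : V)
    (hx : x ∈ RS.weightLattice) :
    (c ^ k) x ∈ RS.weightLattice ∧ x - (c ^ k) x ∈ RS.rootLattice := by
  obtain ⟨Δ, hΔ, l, hnd, hcmpl, hceq⟩ := hc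
  have hlist : ∀ e ∈ l.map fun α => RS.refl α.1 (hΔ.subset α.2),
      ∃ (α : V) (hα : α ∈ RS.roots), e = RS.refl α hα := by
    intro e he
    obtain ⟨a, _, rfl⟩ := List.mem_map.mp he
    exact ⟨a.1, hΔ.subset a.2, rfl⟩
  induction k generalizing x with
  | zero =>
    refine ⟨by simpa using hx, ?_⟩
    have : (c ^ 0) x = x := rfl
    rw [this, sub_self]; exact AddSubgroup.zero_mem _
  | succ n ih =>
    obtain ⟨hy, hxy⟩ := ih x hx
    have hcy : c ((c ^ n) x) ∈ RS.weightLattice ∧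
        (c ^ n) x - c ((c ^ n) x) ∈ RS.rootLattice := by
      have := RS.weight_list_prod _ hlist ((c ^ n) x) hy
      rwa [← hceq] at this
    have hps : (c ^ (n + 1)) x = c ((c ^ n) x) := by rw [pow_succ']; rfl
    rw [hps]
    refine ⟨hcy.1, ?_⟩
    have heq : x - c ((c ^ n) x) = (x - (c ^ n) x) + ((c ^ n) x - c ((c ^ n) x)) := by abel
    rw [heq]
    exact AddSubgroup.add_mem _ hxy hcy.2


end RootSystemData

/-- Let `c` be a Coxeter element of the Weyl group, of order `h`.
Then `h·P ⊆ Q`.  Consequently the index `[P : Q]` is finite and every prime dividing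
`[P : Q]` divides `h`. -/
theorem RootSystemData.coxeterNumber_smul_weightLattice_le_rootLattice
    {V : Type*} [AddCommGroup V] [Module ℚ V] [FiniteDimensional ℚ V]
    (RS : RootSystemData V) (c : V ≃ₗ[ℚ] V) (hc : RS.IsCoxeterElement c) :
    (∀ x ∈ RS.weightLattice, (orderOf c) • x ∈ RS.rootLattice) ∧
    RS.rootLattice.relIndex RS.weightLattice ≠ 0 ∧
    ∀ ℓ : ℕ, ℓ.Prime → ℓ ∣ RS.rootLattice.relIndex RS.weightLattice → ℓ ∣ orderOf c := by
  classical
  have hh0 : orderOf c ≠ 0 := RS.coxeter_orderOf_ne_zero hc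
  set h := orderOf c with hdefh
  have part1 : ∀ x ∈ RS.weightLattice, h • x ∈ RS.rootLattice := by
    intro x hx
    have hchx : ∀ k : ℕ, c ((c ^ k) x) = (c ^ (k + 1)) x := fun k => by rw [pow_succ']; rfl
    have hNfix : c (∑ k ∈ Finset.range h, (c ^ k) x) = ∑ k ∈ Finset.range h, (c ^ k) x := by
      rw [map_sum]
      have h1 : ∑ k ∈ Finset.range h, c ((c ^ k) x)
          = ∑ k ∈ Finset.range h, (c ^ (k + 1)) x :=
        Finset.sum_congr rfl fun k _ => hchx k
      rw [h1]
      have h2 := Finset.sum_range_succ' (fun k => (c ^ k) x) h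
      have h3 := Finset.sum_range_succ (fun k => (c ^ k) x) h
      have hch : (c ^ h) x = x := by rw [hdefh, pow_orderOf_eq_one]; rfl
      have this' := h2.symm.trans h3
      simp only [hch] at this'
      have hc0 : (c ^ 0) x = x := rfl
      rw [hc0] at this'
      exact add_right_cancel this'
    have hN0 : (∑ k ∈ Finset.range h, (c ^ k) x) = 0 :=
      RS.eq_zero_of_coxeter_fixed hc hNfix
    have key : h • x = ∑ k ∈ Finset.range h, (x - (c ^ k) x) := by
      rw [Finset.sum_sub_distrib, hN0, sub_zero, Finset.sum_const, Finset.card_range]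
    rw [key]
    exact AddSubgroup.sum_mem _ fun k _ => (RS.coxeter_weight_pow hc k x hx).2
  refine ⟨part1, ?_⟩
  have hPfg : AddGroup.FG ↥RS.weightLattice := by
    set M : Submodule ℤ V := Submodule.span ℤ ((fun v => ((h : ℚ))⁻¹ • v) '' RS.roots)
      with hM
    have hMfg : M.FG := Submodule.fg_span (RS.finite.image _)
    have hPM : (AddSubgroup.toIntSubmodule RS.weightLattice) ≤ M := by
      intro x hx
      have hq : h • x ∈ RS.rootLattice := part1 x hx
      have hq' : h • x ∈ Submodule.span ℤ RS.roots := by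
        have hle : RS.rootLattice ≤ (Submodule.span ℤ RS.roots).toAddSubgroup :=
          (AddSubgroup.closure_le _).mpr fun r hr => Submodule.subset_span hr
        exact hle hq
      have hspan : ∀ y ∈ Submodule.span ℤ RS.roots, ((h : ℚ))⁻¹ • y ∈ M := by
        intro y hy
        induction hy using Submodule.span_induction with
        | mem z hz => exact Submodule.subset_span ⟨z, hz, rfl⟩
        | zero => rw [smul_zero]; exact Submodule.zero_mem _
        | add u v _ _ hu hv => rw [smul_add]; exact Submodule.add_mem _ hu hv
        | smul n u _ hu => rw [smul_comm]; exact Submodule.smul_mem _ n hu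
      have hhq : (h : ℚ) ≠ 0 := Nat.cast_ne_zero.mpr hh0
      have hxr : x = ((h : ℚ))⁻¹ • ((h : ℚ) • x) := by
        rw [smul_smul, inv_mul_cancel₀ hhq, one_smul]
      have hcast : (h : ℚ) • x = h • x := Nat.cast_smul_eq_nsmul ℚ h x
      have : x ∈ M := by rw [hxr, hcast]; exact hspan _ hq'
      exact this
    haveI : IsNoetherian ℤ ↥M := isNoetherian_of_fg_of_noetherian M hMfg
    have h1 : ((AddSubgroup.toIntSubmodule RS.weightLattice).comap M.subtype).FG :=
      IsNoetherian.noetherian _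
    have h2 := h1.map M.subtype
    rw [Submodule.map_comap_subtype, inf_eq_right.mpr hPM] at h2
    exact (AddGroup.fg_iff_addSubgroup_fg _).mpr ((Submodule.fg_iff_addSubgroup_fg _).mp h2)
  haveI := hPfg
  set Hq := RS.rootLattice.addSubgroupOf RS.weightLattice with hHq
  have htor : ∀ t : ↥RS.weightLattice ⧸ Hq, h • t = 0 := by
    intro t
    obtain ⟨x, rfl⟩ := QuotientAddGroup.mk'_surjective Hq t
    rw [← map_nsmul]
    apply (QuotientAddGroup.eq_zero_iff _).mpr
    have hcoe : ((h • x : ↥RS.weightLattice) : V) = h • (x : V) := rfl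
    apply (AddSubgroup.mem_addSubgroupOf).mpr
    rw [hcoe]
    exact part1 x.1 x.2
  have hfin : Finite (↥RS.weightLattice ⧸ Hq) :=
    AddCommGroup.finite_of_fg_torsion _
      (fun t => isOfFinAddOrder_iff_nsmul_eq_zero.mpr ⟨h, Nat.pos_of_ne_zero hh0, htor t⟩)
  have hcard : RS.rootLattice.relIndex RS.weightLattice
      = Nat.card (↥RS.weightLattice ⧸ Hq) := rfl
  constructor
  · rw [hcard]
    exact Nat.card_ne_zero.mpr ⟨⟨0⟩, hfin⟩
  · intro ℓ hℓ hdvd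
    haveI := hfin
    haveI := Fintype.ofFinite (↥RS.weightLattice ⧸ Hq)
    haveI : Fact ℓ.Prime := ⟨hℓ⟩
    rw [hcard, Nat.card_eq_fintype_card] at hdvd
    obtain ⟨g, hg⟩ := exists_prime_addOrderOf_dvd_card ℓ hdvd
    have hdvd2 := addOrderOf_dvd_of_nsmul_eq_zero (htor g)
    rwa [hg] at hdvd2
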